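/- Suppose in addition that R has characteristic p. Let α₀ be a unit of R such that x^n − α₀ is basic irreducible over R, let α = α₀^{p^s}, write f = x^n − α₀, and let K = R[x]/⟨x^{np^s} − α⟩ (so that x^{np^s} − α = f^{p^s} in R[x]). Let I = ⟨f^ω + γ f^t G⟩ be an ideal of K with 0 < ω < p^s, G either 0 or a unit of K, and 0 ≤ t < ω when G ≠ 0. Let κ be the least nonnegative integer such that γ f^κ ∈ I. Then κ = ω if G = 0, and κ = min(ω, p^s − ω + t) if G ≠ 0. -/

import Mathlib

open Polynomial

-- Auxiliary general lemma: the whole argument in R[X].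
section Aux
variable {R : Type} [CommRing R]

theorem stmt9_aux (p s n : ℕ) (hp : p.Prime)
    (γ : R) (hγ : γ ≠ 0) (hγ2 : γ ^ 2 = 0)
    (hmax : ∀ a : R, a ∈ Ideal.span {γ} ↔ ¬ IsUnit a)
    (hchar : CharP R p)
    (α₀ : R)
    (hirr : Irreducible ((X ^ n - C α₀ : R[X]).map (Ideal.Quotient.mk (Ideal.span {γ}))))
    (ω t : ℕ) (hω : 0 < ω) (hω' : ω < p ^ s)
    (k : ℕ) (G₀ h g : R[X]) (hk : k < ω)
    (hk2 : G₀ = 0 ∨ k < p ^ s - ω + t)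
    (E : C γ * (X ^ n - C α₀) ^ k =
      ((X ^ n - C α₀) ^ ω + C γ * (X ^ n - C α₀) ^ t * G₀) * h +
        (X ^ (n * p ^ s) - C (α₀ ^ p ^ s)) * g) : False := by
  haveI : Fact p.Prime := ⟨hp⟩
  -- the maximal ideal and the residue field
  have hmaxI : (Ideal.span {γ}).IsMaximal := by
    rw [Ideal.isMaximal_iff]
    constructor
    · intro h1
      exact (hmax 1).1 h1 isUnit_one
    · intro J x _ hx hxJ
      have hux : IsUnit x := by
        by_contra hux
        exact hx ((hmax x).2 hux)
      exact (Ideal.eq_top_of_isUnit_mem J hxJ hux) ▸ Submodule.mem_top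
  letI : Field (R ⧸ Ideal.span {γ}) := Ideal.Quotient.field _
  set φ : R →+* R ⧸ Ideal.span {γ} := Ideal.Quotient.mk (Ideal.span {γ}) with hφ
  set f : R[X] := X ^ n - C α₀ with hfdef
  -- freshman's dream
  have hq : (X ^ (n * p ^ s) - C (α₀ ^ p ^ s) : R[X]) = f ^ p ^ s := by
    rw [hfdef, sub_pow_char_pow, ← C_pow, ← pow_mul]
  -- map to residue field kills C γ
  have hφγ : φ γ = 0 := by
    rw [Ideal.Quotient.eq_zero_iff_mem]
    exact Ideal.mem_span_singleton_self γ
  -- H maps to 0 iff C γ divides H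
  have hC : ∀ H : R[X], H.map φ = 0 ↔ C γ ∣ H := by
    intro H
    rw [C_dvd_iff_dvd_coeff]
    constructor
    · intro h0 i
      have := congrArg (fun q => q.coeff i) h0
      simp only [coeff_map, coeff_zero] at this
      rw [← Ideal.mem_span_singleton]
      rwa [hφ, Ideal.Quotient.eq_zero_iff_mem] at this
    · intro hd
      ext i
      simp only [coeff_map, coeff_zero]
      rw [hφ, Ideal.Quotient.eq_zero_iff_mem, Ideal.mem_span_singleton]
      exact hd i
  -- annihilator of γ
  have hann : ∀ H : R[X], C γ * H = 0 → H.map φ = 0 := by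
    intro H h0
    rw [hC]
    rw [C_dvd_iff_dvd_coeff]
    intro i
    have : γ * H.coeff i = 0 := by
      have := congrArg (fun q => q.coeff i) h0
      simpa [coeff_C_mul] using this
    rw [← Ideal.mem_span_singleton, hmax]
    intro hu
    exact hγ (by
      obtain ⟨u, hu'⟩ := hu
      have := congrArg (fun y => y * (↑u⁻¹ : R)) this
      simp [← hu', mul_assoc] at this
      exact this)
  have hγγ : (C γ : R[X]) * C γ = 0 := by
    rw [← C_mul, ← pow_two, hγ2, C_0]
  set f' : (R ⧸ Ideal.span {γ})[X] := f.map φ with hf'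
  have hf'ne : f' ≠ 0 := hirr.ne_zero
  have hf'nu : ¬ IsUnit f' := hirr.not_isUnit
  -- apply φ to E
  have E1 : f' ^ ω * ((h.map φ) + f' ^ (p ^ s - ω) * (g.map φ)) = 0 := by
    have := congrArg (Polynomial.map φ) E
    simp only [Polynomial.map_mul, Polynomial.map_add, Polynomial.map_pow, map_C, hφγ, C_0,
      zero_mul, hq] at this
    rw [← hf'] at this
    have hpow : f' ^ ω * f' ^ (p ^ s - ω) = f' ^ p ^ s := by
      rw [← pow_add, Nat.add_sub_cancel' hω'.le]
    linear_combination map φ g * hpow - this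
  have E2 : (h + f ^ (p ^ s - ω) * g).map φ = 0 := by
    have := mul_eq_zero.1 E1
    rcases this with h0 | h0
    · exact (hf'ne ((pow_eq_zero_iff hω.ne').1 h0)).elim
    · simpa [Polynomial.map_add, Polynomial.map_mul, Polynomial.map_pow, hf'] using h0
  obtain ⟨h₁, hh₁⟩ := (hC _).1 E2
  -- so h = C γ * h₁ - f ^ (p^s - ω) * g
  have hhform : h = C γ * h₁ - f ^ (p ^ s - ω) * g := by
    linear_combination hh₁
  -- substitute back
  have hpow1 : f ^ ω * f ^ (p ^ s - ω) = f ^ p ^ s := by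
    rw [← pow_add, Nat.add_sub_cancel' hω'.le]
  have hpow2 : f ^ t * f ^ (p ^ s - ω) = f ^ (p ^ s - ω + t) := by
    rw [← pow_add, Nat.add_comm]
  have E3 : C γ * (f ^ k - f ^ ω * h₁ + f ^ (p ^ s - ω + t) * G₀ * g) = 0 := by
    rw [hq] at E
    rw [hhform] at E
    linear_combination E - g * hpow1 - C γ * G₀ * g * hpow2 + f ^ t * G₀ * h₁ * hγγ
  have E4 : f' ^ k = f' ^ ω * (h₁.map φ) - f' ^ (p ^ s - ω + t) * (G₀.map φ) * (g.map φ) := by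
    have := hann _ E3
    simp only [Polynomial.map_add, Polynomial.map_sub, Polynomial.map_mul, Polynomial.map_pow,
      ← hf'] at this
    linear_combination this
  -- divisibility contradiction
  have hdvd : f' ^ (k + 1) ∣ f' ^ k := by
    rw [E4]
    apply dvd_sub
    · exact Dvd.dvd.mul_right (pow_dvd_pow _ (by omega)) _
    · rcases hk2 with rfl | hlt
      · simp
      · exact Dvd.dvd.mul_right (Dvd.dvd.mul_right (pow_dvd_pow _ (by omega)) _) _
  obtain ⟨c, hc⟩ := hdvd
  have : f' * c = 1 := by
    have h0 : f' ^ k ≠ 0 := pow_ne_zero _ hf'ne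
    apply mul_left_cancel₀ h0
    rw [mul_one, ← mul_assoc, ← pow_succ]
    exact hc.symm
  exact hf'nu (IsUnit.of_mul_eq_one _ this)

end Aux

theorem stmt9 {R : Type} [CommRing R] [Finite R]
    (p m s n : ℕ) (hp : p.Prime) (hm : 0 < m) (hs : 0 < s) (hn : 0 < n)
    (hnp : Nat.gcd n p = 1)
    (γ : R) (hγ : γ ≠ 0) (hγ2 : γ ^ 2 = 0)
    (hmax : ∀ a : R, a ∈ Ideal.span {γ} ↔ ¬ IsUnit a)
    (hres : Nat.card (R ⧸ Ideal.span {γ}) = p ^ m)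
    (hchar : CharP R p)
    (α₀ : R) (hα₀ : IsUnit α₀)
    (hirr : Irreducible ((X ^ n - C α₀ : R[X]).map (Ideal.Quotient.mk (Ideal.span {γ}))))
    (ω t : ℕ) (G : R[X] ⧸ Ideal.span {(X ^ (n * p ^ s) - C (α₀ ^ p ^ s) : R[X])})
    (hω : 0 < ω) (hω' : ω < p ^ s) (hG : G = 0 ∨ IsUnit G) (ht : G ≠ 0 → t < ω)
    (κ : ℕ)
    (hκ : IsLeast {k : ℕ |
      Ideal.Quotient.mk (Ideal.span {(X ^ (n * p ^ s) - C (α₀ ^ p ^ s) : R[X])}) (C γ) *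
        (Ideal.Quotient.mk (Ideal.span {(X ^ (n * p ^ s) - C (α₀ ^ p ^ s) : R[X])})
          (X ^ n - C α₀)) ^ k ∈
      Ideal.span {Ideal.Quotient.mk
          (Ideal.span {(X ^ (n * p ^ s) - C (α₀ ^ p ^ s) : R[X])})
          ((X ^ n - C α₀) ^ ω) +
        Ideal.Quotient.mk (Ideal.span {(X ^ (n * p ^ s) - C (α₀ ^ p ^ s) : R[X])})
          (C γ * (X ^ n - C α₀) ^ t) * G}} κ) :
    (G = 0 → κ = ω) ∧ (G ≠ 0 → κ = min ω (p ^ s - ω + t)) := by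
  haveI : Fact p.Prime := ⟨hp⟩
  obtain ⟨G₀, rfl⟩ := Ideal.Quotient.mk_surjective G
  set q : R[X] := X ^ (n * p ^ s) - C (α₀ ^ p ^ s) with hqdef
  set f : R[X] := X ^ n - C α₀ with hfdef
  set mk : R[X] →+* R[X] ⧸ Ideal.span {q} := Ideal.Quotient.mk (Ideal.span {q}) with hmk
  have hq : q = f ^ p ^ s := by
    rw [hqdef, hfdef, sub_pow_char_pow, ← C_pow, ← pow_mul]
  have hγγ : (C γ : R[X]) * C γ = 0 := by
    rw [← C_mul, ← pow_two, hγ2, C_0]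
  have hq0 : mk q = 0 := Ideal.Quotient.eq_zero_iff_mem.2 (Ideal.mem_span_singleton_self q)
  -- membership characterization
  have mem_iff : ∀ (k : ℕ),
      (mk (C γ) * (mk f) ^ k ∈ Ideal.span {mk (f ^ ω) + mk (C γ * f ^ t) * mk G₀}) ↔
      ∃ h g : R[X], C γ * f ^ k = (f ^ ω + C γ * f ^ t * G₀) * h + q * g := by
    intro k
    rw [Ideal.mem_span_singleton]
    constructor
    · rintro ⟨c, hc⟩
      obtain ⟨h, rfl⟩ := Ideal.Quotient.mk_surjective c
      have hc' : mk (C γ * f ^ k) = mk ((f ^ ω + C γ * f ^ t * G₀) * h) := by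
        simp only [map_mul, map_add, map_pow]
        exact hc
      rw [Ideal.Quotient.mk_eq_mk_iff_sub_mem, Ideal.mem_span_singleton] at hc'
      obtain ⟨g, hg⟩ := hc'
      exact ⟨h, g, by linear_combination hg⟩
    · rintro ⟨h, g, hE⟩
      refine ⟨mk h, ?_⟩
      have : mk (C γ * f ^ k) = mk ((f ^ ω + C γ * f ^ t * G₀) * h) := by
        rw [Ideal.Quotient.mk_eq_mk_iff_sub_mem, Ideal.mem_span_singleton]
        exact ⟨g, by linear_combination hE⟩
      simp only [map_mul, map_add, map_pow] at this
      exact this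
  -- upper bound: ω is always in the set
  have memω : mk (C γ) * (mk f) ^ ω ∈ Ideal.span {mk (f ^ ω) + mk (C γ * f ^ t) * mk G₀} := by
    rw [mem_iff]
    exact ⟨C γ, 0, by linear_combination (-(f ^ t * G₀)) * hγγ⟩
  -- upper bound: p^s - ω + t is in the set when mk G₀ is a unit
  have memA : IsUnit (mk G₀) →
      mk (C γ) * (mk f) ^ (p ^ s - ω + t) ∈
        Ideal.span {mk (f ^ ω) + mk (C γ * f ^ t) * mk G₀} := by
    rintro ⟨u, hu⟩
    rw [Ideal.mem_span_singleton]
    refine ⟨(mk f) ^ (p ^ s - ω) * (↑u⁻¹ : (R[X] ⧸ Ideal.span {q})), ?_⟩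
    have hGU : mk G₀ * (↑u⁻¹ : (R[X] ⧸ Ideal.span {q})) = 1 := by
      rw [← hu]; exact u.mul_inv
    have h0 : (mk f) ^ ω * (mk f) ^ (p ^ s - ω) = 0 := by
      rw [← pow_add, Nat.add_sub_cancel' hω'.le, ← map_pow, ← hq, hq0]
    have hA : p ^ s - ω + t = t + (p ^ s - ω) := by omega
    rw [hA, pow_add, map_pow, map_mul, map_pow]
    linear_combination (-(↑u⁻¹ : (R[X] ⧸ Ideal.span {q}))) * h0 -
      (mk (C γ) * (mk f) ^ t * (mk f) ^ (p ^ s - ω)) * hGU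
  constructor
  · intro hG0
    have hω_mem : ω ∈ {k : ℕ | mk (C γ) * (mk f) ^ k ∈
        Ideal.span {mk (f ^ ω) + mk (C γ * f ^ t) * mk G₀}} := memω
    refine le_antisymm (hκ.2 hω_mem) ?_
    by_contra hlt
    push_neg at hlt
    obtain ⟨h, g, E⟩ := (mem_iff κ).1 hκ.1
    obtain ⟨d, hd⟩ := (Ideal.Quotient.eq_zero_iff_dvd q G₀).1 hG0
    have E' : C γ * f ^ κ = (f ^ ω + C γ * f ^ t * 0) * h + q * (g + C γ * f ^ t * d * h) := by
      rw [hd] at E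
      linear_combination E
    exact stmt9_aux p s n hp γ hγ hγ2 hmax hchar α₀ hirr ω t hω hω' κ 0 h
      (g + C γ * f ^ t * d * h) hlt (Or.inl rfl) E'
  · intro hGne
    have hGu : IsUnit (mk G₀) := hG.resolve_left hGne
    refine le_antisymm (le_min (hκ.2 memω) (hκ.2 (memA hGu))) ?_
    by_contra hlt
    push_neg at hlt
    rw [lt_min_iff] at hlt
    obtain ⟨h, g, E⟩ := (mem_iff κ).1 hκ.1
    exact stmt9_aux p s n hp γ hγ hγ2 hmax hchar α₀ hirr ω t hω hω' κ G₀ h g hlt.1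
      (Or.inr hlt.2) E
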